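/- Let H be a complex separable infinite-dimensional Hilbert space, T a bounded operator on H, m ∈ ℕ, and (v_i)_{i∈Fin m} a finite family such that {Tⁿ v_i : i ∈ Fin m, n ≥ 0} is a frame of H with some bounds A, B > 0. Then there exist a bounded operator Q on H with ‖Q‖ ≤ 1, a continuous linear equivalence V : H → H with Q = V T V⁻¹, and a family (w_i)_{i∈Fin m} in H such that {Qⁿ w_i : i ∈ Fin m, n ≥ 0} is a Parseval frame of H. -/

import Mathlib

open scoped ComplexInnerProductSpace ENNReal NNReal

set_option maxHeartbeats 4000000
set_option synthInstance.maxHeartbeats 1000000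

namespace ContractionParsevalAux

variable {H : Type*} [NormedAddCommGroup H] [InnerProductSpace ℂ H] [CompleteSpace H]

omit [CompleteSpace H] in
lemma summable_coeff {ι : Type*} (e : ι → H) (A : ℝ) (hA : 0 < A)
    (hlow : ∀ x : H, A * ‖x‖ ^ 2 ≤ ∑' p, ‖⟪x, e p⟫‖ ^ 2) (x : H) :
    Summable fun p => ‖⟪x, e p⟫‖ ^ 2 := by
  rcases eq_or_ne x 0 with rfl | hx
  · have : (fun p : ι => ‖⟪(0 : H), e p⟫‖ ^ 2) = fun _ => 0 := by funext p; simp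
    rw [this]; exact summable_zero
  · by_contra h
    have h0 := hlow x
    rw [tsum_eq_zero_of_not_summable h] at h0
    have hx' : 0 < ‖x‖ := norm_pos_iff.mpr hx
    exact absurd h0 (not_le.mpr (mul_pos hA (pow_pos hx' 2)))

lemma exists_sqrt (S : H →L[ℂ] H) (hS : (0 : H →L[ℂ] H) ≤ S) :
    ∃ R : H →L[ℂ] H, (0 : H →L[ℂ] H) ≤ R ∧ R * R = S :=
  ⟨CFC.sqrt S, CFC.sqrt_nonneg S, CFC.sqrt_mul_sqrt_self S hS⟩

lemma norm_le_one_of_parseval {m : ℕ} (Q : H →L[ℂ] H) (w : Fin m → H)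
    (hsum : ∀ x : H, Summable fun p : Fin m × ℕ => ‖⟪x, (Q ^ p.2) (w p.1)⟫‖ ^ 2)
    (hPar : ∀ x : H, ∑' p : Fin m × ℕ, ‖⟪x, (Q ^ p.2) (w p.1)⟫‖ ^ 2 = ‖x‖ ^ 2) :
    ‖Q‖ ≤ 1 := by
  rw [← LinearIsometryEquiv.norm_map (ContinuousLinearMap.adjoint (𝕜 := ℂ) (E := H) (F := H)) Q]
  apply ContinuousLinearMap.opNorm_le_bound _ zero_le_one
  intro x
  rw [one_mul]
  have hinj : Function.Injective (fun p : Fin m × ℕ => ((p.1, p.2 + 1) : Fin m × ℕ)) := by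
    intro p q h
    simp only [Prod.mk.injEq, add_left_inj] at h
    exact Prod.ext h.1 h.2
  have h1 : ∀ p : Fin m × ℕ, ‖⟪(ContinuousLinearMap.adjoint Q) x, (Q ^ p.2) (w p.1)⟫‖ ^ 2 =
      ‖⟪x, (Q ^ (p.2 + 1)) (w p.1)⟫‖ ^ 2 := by
    intro p
    rw [ContinuousLinearMap.adjoint_inner_left, ← ContinuousLinearMap.mul_apply, ← pow_succ']
  have hsq : ‖(ContinuousLinearMap.adjoint Q) x‖ ^ 2 ≤ ‖x‖ ^ 2 := by
    calc ‖(ContinuousLinearMap.adjoint Q) x‖ ^ 2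
        = ∑' p : Fin m × ℕ, ‖⟪(ContinuousLinearMap.adjoint Q) x, (Q ^ p.2) (w p.1)⟫‖ ^ 2 :=
          (hPar _).symm
      _ = ∑' p : Fin m × ℕ, ‖⟪x, (Q ^ (p.2 + 1)) (w p.1)⟫‖ ^ 2 := tsum_congr h1
      _ ≤ ∑' p : Fin m × ℕ, ‖⟪x, (Q ^ p.2) (w p.1)⟫‖ ^ 2 := by
          have hf' : Summable (fun p : Fin m × ℕ => ‖⟪x, (Q ^ (p.2 + 1)) (w p.1)⟫‖ ^ 2) := by
            have h2 := (hsum x).comp_injective hinj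
            exact h2
          exact Summable.tsum_le_tsum_of_inj
            (f := fun p : Fin m × ℕ => ‖⟪x, (Q ^ (p.2 + 1)) (w p.1)⟫‖ ^ 2)
            (g := fun p : Fin m × ℕ => ‖⟪x, (Q ^ p.2) (w p.1)⟫‖ ^ 2)
            (fun p : Fin m × ℕ => ((p.1, p.2 + 1) : Fin m × ℕ)) hinj
            (fun c _ => sq_nonneg _) (fun p => le_of_eq (by rfl))
            hf' (hsum x)
      _ = ‖x‖ ^ 2 := hPar x
  nlinarith [norm_nonneg ((ContinuousLinearMap.adjoint Q) x), norm_nonneg x, hsq]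

end ContractionParsevalAux

/-- If `{Tⁿ vᵢ : i ∈ Fin m}` is a frame of iterations of an
infinite-dimensional separable Hilbert space `H`, then there is a contraction `Q`
similar to `T` admitting a Parseval frame of iterations with the same number `m` of
generators. -/
theorem contraction_similar_with_parseval_frame
    (H : Type*) [NormedAddCommGroup H] [InnerProductSpace ℂ H]
    [CompleteSpace H] [TopologicalSpace.SeparableSpace H]
    (hinf : ¬ FiniteDimensional ℂ H)
    (T : H →L[ℂ] H) (m : ℕ) (v : Fin m → H) (A B : ℝ) (hA : 0 < A) (hB : 0 < B)
    (hframe : ∀ x : H,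
      A * ‖x‖ ^ 2 ≤ ∑' p : Fin m × ℕ, ‖⟪x, (T ^ p.2) (v p.1)⟫‖ ^ 2 ∧
      ∑' p : Fin m × ℕ, ‖⟪x, (T ^ p.2) (v p.1)⟫‖ ^ 2 ≤ B * ‖x‖ ^ 2) :
    ∃ (Q : H →L[ℂ] H) (V : H ≃L[ℂ] H) (w : Fin m → H),
      ‖Q‖ ≤ 1 ∧ (∀ x : H, Q x = V (T (V.symm x))) ∧
      ∀ x : H, ∑' p : Fin m × ℕ, ‖⟪x, (Q ^ p.2) (w p.1)⟫‖ ^ 2 = ‖x‖ ^ 2 := by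
  classical
  set e : Fin m × ℕ → H := fun p => (T ^ p.2) (v p.1) with he
  have hlow : ∀ x : H, A * ‖x‖ ^ 2 ≤ ∑' p : Fin m × ℕ, ‖⟪x, e p⟫‖ ^ 2 := fun x => (hframe x).1
  have hup : ∀ x : H, ∑' p : Fin m × ℕ, ‖⟪x, e p⟫‖ ^ 2 ≤ B * ‖x‖ ^ 2 := fun x => (hframe x).2
  have hsum : ∀ x : H, Summable fun p : Fin m × ℕ => ‖⟪x, e p⟫‖ ^ 2 :=
    ContractionParsevalAux.summable_coeff e A hA hlow
  -- the analysis operator `Θ` into `ℓ²`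
  have hrpow : ∀ (x : H) (p : Fin m × ℕ),
      ‖⟪e p, x⟫‖ ^ (2 : ℝ≥0∞).toReal = ‖⟪x, e p⟫‖ ^ 2 := by
    intro x p
    rw [norm_inner_symm, show ((2 : ℝ≥0∞)).toReal = ((2 : ℕ) : ℝ) by simp]
    exact Real.rpow_natCast _ 2
  have hmem : ∀ x : H, Memℓp (fun p : Fin m × ℕ => ⟪e p, x⟫) 2 := by
    intro x
    apply memℓp_gen
    have : (fun p : Fin m × ℕ => ‖⟪e p, x⟫‖ ^ (2 : ℝ≥0∞).toReal) =
        fun p => ‖⟪x, e p⟫‖ ^ 2 := funext fun p => hrpow x p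
    rw [this]; exact hsum x
  set K := lp (fun _ : Fin m × ℕ => ℂ) 2 with hK
  set Θlin : H →ₗ[ℂ] K :=
    { toFun := fun x => ⟨fun p => ⟪e p, x⟫, hmem x⟩
      map_add' := by
        intro x y
        apply lp.ext
        funext p
        simp only [lp.coeFn_add, Pi.add_apply]
        exact inner_add_right _ _ _
      map_smul' := by
        intro c x
        apply lp.ext
        funext p
        simp only [lp.coeFn_smul, Pi.smul_apply, RingHom.id_apply]
        exact inner_smul_right _ _ _ } with hΘlin
  have hnorm2 : ∀ x : H, ‖Θlin x‖ ^ 2 = ∑' p : Fin m × ℕ, ‖⟪x, e p⟫‖ ^ 2 := by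
    intro x
    have h := lp.norm_rpow_eq_tsum (p := 2) (by norm_num) (Θlin x)
    have h2 : ‖Θlin x‖ ^ (2 : ℝ≥0∞).toReal = ‖Θlin x‖ ^ 2 := by
      rw [show ((2 : ℝ≥0∞)).toReal = ((2 : ℕ) : ℝ) by simp]
      exact Real.rpow_natCast _ 2
    rw [h2] at h
    rw [h]
    exact tsum_congr fun p => hrpow x p
  have hΘbound : ∀ x : H, ‖Θlin x‖ ≤ Real.sqrt B * ‖x‖ := by
    intro x
    have h1 : ‖Θlin x‖ ^ 2 ≤ B * ‖x‖ ^ 2 := by rw [hnorm2]; exact hup x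
    calc ‖Θlin x‖ = Real.sqrt (‖Θlin x‖ ^ 2) := (Real.sqrt_sq (norm_nonneg _)).symm
      _ ≤ Real.sqrt (B * ‖x‖ ^ 2) := Real.sqrt_le_sqrt h1
      _ = Real.sqrt B * ‖x‖ := by
          rw [Real.sqrt_mul hB.le, Real.sqrt_sq (norm_nonneg _)]
  set Θ : H →L[ℂ] K := Θlin.mkContinuous (Real.sqrt B) hΘbound with hΘ
  have hΘapp : ∀ x : H, Θ x = Θlin x := fun _ => rfl
  set S : H →L[ℂ] H := ContinuousLinearMap.adjoint Θ ∘L Θ with hS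
  have hS_inner : ∀ x : H, ⟪x, S x⟫ = ((‖Θlin x‖ ^ 2 : ℝ) : ℂ) := by
    intro x
    have : ⟪x, S x⟫ = ⟪Θ x, Θ x⟫ := by
      rw [hS, ContinuousLinearMap.comp_apply, ContinuousLinearMap.adjoint_inner_right]
    rw [this, inner_self_eq_norm_sq_to_K, hΘapp]
    norm_cast
  have hS_pos : (0 : H →L[ℂ] H) ≤ S := by
    rw [ContinuousLinearMap.nonneg_iff_isPositive]
    have := ContinuousLinearMap.isPositive_one.adjoint_conj Θ
    simpa [ContinuousLinearMap.one_def] using this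
  have hSlow : ∀ x : H, A * ‖x‖ ^ 2 ≤ ‖Θlin x‖ ^ 2 := by
    intro x; rw [hnorm2]; exact hlow x
  have hSunit : IsUnit S := by
    apply ContinuousLinearMap.isUnit_of_forall_le_norm_inner_map S (c := ⟨A, hA.le⟩)
      (by exact_mod_cast hA)
    intro x
    have h1 : ‖⟪S x, x⟫‖ = ‖Θlin x‖ ^ 2 := by
      rw [norm_inner_symm, hS_inner]
      simp [abs_of_nonneg (sq_nonneg ‖Θlin x‖)]
    rw [h1]
    have := hSlow x
    calc ‖x‖ ^ 2 * (⟨A, hA.le⟩ : ℝ≥0) = A * ‖x‖ ^ 2 := by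
          simp [NNReal.coe_mk, mul_comm]
      _ ≤ ‖Θlin x‖ ^ 2 := hSlow x
  -- the square root of `S`
  obtain ⟨R, hR0, hRR⟩ := ContractionParsevalAux.exists_sqrt S hS_pos
  have hRsa : IsSelfAdjoint R :=
    ((ContinuousLinearMap.nonneg_iff_isPositive R).mp hR0).isSelfAdjoint
  have hRsym : ∀ x y : H, ⟪R x, y⟫ = ⟪x, R y⟫ := fun x y =>
    (ContinuousLinearMap.isSelfAdjoint_iff_isSymmetric.mp hRsa) x y
  have hRnorm : ∀ x : H, ‖R x‖ ^ 2 = ‖Θlin x‖ ^ 2 := by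
    intro x
    have h1 : ⟪R x, R x⟫ = ⟪x, S x⟫ := by
      rw [hRsym x (R x), ← ContinuousLinearMap.mul_apply, hRR]
    rw [hS_inner] at h1
    rw [← @inner_self_eq_norm_sq ℂ]
    simpa [← Complex.ofReal_pow] using congrArg Complex.re h1
  have hRlow : ∀ x : H, A * ‖x‖ ^ 2 ≤ ‖R x‖ ^ 2 := fun x => by
    rw [hRnorm]; exact hSlow x
  have hRunit : IsUnit R := by
    obtain ⟨u, hu⟩ := hSunit
    have h1 : R * (R * ↑u⁻¹) = 1 := by
      rw [← mul_assoc, hRR, ← hu, u.mul_inv]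
    have h2 : (↑u⁻¹ * R) * R = 1 := by
      rw [mul_assoc, hRR, ← hu, u.inv_mul]
    have hcc : R * ↑u⁻¹ = ↑u⁻¹ * R := by
      calc R * ↑u⁻¹ = ((↑u⁻¹ * R) * R) * (R * ↑u⁻¹) := by rw [h2, one_mul]
        _ = (↑u⁻¹ * R) * (R * (R * ↑u⁻¹)) := by rw [mul_assoc]
        _ = ↑u⁻¹ * R := by rw [h1, mul_one]
    exact ⟨⟨R, R * ↑u⁻¹, h1, by rw [hcc]; exact h2⟩, rfl⟩
  obtain ⟨uR, huR⟩ := hRunit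
  set E : H ≃L[ℂ] H := ContinuousLinearEquiv.unitsEquiv ℂ H uR with hEdef
  have hE : ∀ x : H, E x = R x := fun x => by
    rw [hEdef, ContinuousLinearEquiv.unitsEquiv_apply, huR]
  clear hEdef hS hΘ hΘlin
  clear_value E S Θ Θlin
  -- the contraction `Q`, the similarity `E.symm`, and the generators `w`
  set Q : H →L[ℂ] H := (E.symm : H →L[ℂ] H) ∘L (T ∘L (E : H →L[ℂ] H)) with hQdef
  set w : Fin m → H := fun i => E.symm (v i) with hw
  have hQapp : ∀ x : H, Q x = E.symm (T (E x)) := fun x => rfl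
  have hQpow : ∀ (n : ℕ) (i : Fin m), (Q ^ n) (w i) = E.symm ((T ^ n) (v i)) := by
    intro n i
    induction n with
    | zero => simp [hw]
    | succ n ih =>
      rw [pow_succ', pow_succ', ContinuousLinearMap.mul_apply, ih,
        ContinuousLinearMap.mul_apply, hQapp, E.apply_symm_apply]
  have hinner_symm' : ∀ x z : H, ⟪x, E.symm z⟫ = ⟪E.symm x, z⟫ := by
    intro x z
    conv_lhs => rw [← E.apply_symm_apply x, hE (E.symm x)]
    rw [hRsym, ← hE (E.symm z), E.apply_symm_apply]
  have hterm : ∀ (x : H) (p : Fin m × ℕ),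
      ‖⟪x, (Q ^ p.2) (w p.1)⟫‖ = ‖⟪E.symm x, e p⟫‖ := by
    intro x p
    rw [hQpow p.2 p.1, hinner_symm']
  have hPar0 : ∀ x : H, ∑' p : Fin m × ℕ, ‖⟪E.symm x, e p⟫‖ ^ 2 = ‖x‖ ^ 2 := by
    intro x
    calc ∑' p : Fin m × ℕ, ‖⟪E.symm x, e p⟫‖ ^ 2 = ‖Θlin (E.symm x)‖ ^ 2 := (hnorm2 _).symm
      _ = ‖R (E.symm x)‖ ^ 2 := (hRnorm _).symm
      _ = ‖E (E.symm x)‖ ^ 2 := by rw [hE]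
      _ = ‖x‖ ^ 2 := by rw [E.apply_symm_apply]
  have hPar : ∀ x : H, ∑' p : Fin m × ℕ, ‖⟪x, (Q ^ p.2) (w p.1)⟫‖ ^ 2 = ‖x‖ ^ 2 := by
    intro x
    rw [← hPar0 x]
    exact tsum_congr fun p => by rw [hterm]
  have hsumQ : ∀ x : H, Summable fun p : Fin m × ℕ => ‖⟪x, (Q ^ p.2) (w p.1)⟫‖ ^ 2 :=
    fun x => (hsum (E.symm x)).congr fun p => by rw [hterm]
  refine ⟨Q, E.symm, w, ContractionParsevalAux.norm_le_one_of_parseval Q w hsumQ hPar, ?_, hPar⟩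
  intro x
  rw [hQapp, ContinuousLinearEquiv.symm_symm]
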